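/- Let p be a prime, m, n ≥ 1 integers, and set M := (p^m ℤ_p)^n. Let f₁, …, f_n ∈ ℤ_p[X₁,…,X_n] with f_i(0) = 0 for all i, and let f : M → ℤ_p^n be the induced map. Assume the Jacobian determinant J := det(∂f_i/∂X_j), evaluated at any point of M, lies in ℤ_p^×. Then f maps M into M and the restricted map f : M → M is a bijection. -/

import Mathlib

open MvPolynomial

section Aux

variable {p : ℕ} [Fact p.Prime]

/-- Nonarchimedean bound for finite sums in `ℤ_[p]`. -/
lemma padic_norm_finset_sum_le {ι : Type*} (s : Finset ι) (f : ι → ℤ_[p]) {B : ℝ}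
    (hB : 0 ≤ B) (h : ∀ i ∈ s, ‖f i‖ ≤ B) : ‖∑ i ∈ s, f i‖ ≤ B := by
  classical
  induction s using Finset.cons_induction with
  | empty => simpa using hB
  | cons a t ha ih =>
    rw [Finset.sum_cons]
    exact (PadicInt.nonarchimedean _ _).trans
      (max_le (h a (Finset.mem_cons_self a t))
        (ih fun i hi => h i (Finset.mem_cons_of_mem hi)))

lemma padic_norm_sub_le_max (a b : ℤ_[p]) : ‖a - b‖ ≤ max ‖a‖ ‖b‖ := by
  rw [sub_eq_add_neg]
  exact (PadicInt.nonarchimedean _ _).trans (by rw [norm_neg])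

lemma padic_pow_norm_le {a : ℤ_[p]} {r : ℝ} (hr : 0 ≤ r) (ha : ‖a‖ ≤ r) (k : ℕ) :
    ‖a ^ k‖ ≤ r ^ k := by
  induction k with
  | zero => simp
  | succ k ih =>
    rw [pow_succ, pow_succ]
    exact (norm_mul_le _ _).trans (mul_le_mul ih ha (norm_nonneg _) (by positivity))

lemma padic_pow_sub_pow_norm_le {a b : ℤ_[p]} {r d : ℝ} (hr0 : 0 ≤ r) (hr1 : r ≤ 1)
    (hd : 0 ≤ d) (ha : ‖a‖ ≤ r) (hb : ‖b‖ ≤ r) (hab : ‖a - b‖ ≤ d) (k : ℕ) :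
    ‖a ^ k - b ^ k‖ ≤ d * r ^ (k - 1) := by
  induction k with
  | zero => simpa using by positivity
  | succ k ih =>
    have hid : a ^ (k + 1) - b ^ (k + 1) = a * (a ^ k - b ^ k) + (a - b) * b ^ k := by ring
    rw [hid]
    have hrk : r * r ^ (k - 1) ≤ r ^ k := by
      cases k with
      | zero => simpa using hr1
      | succ k => rw [Nat.succ_sub_one, ← pow_succ']
    refine (PadicInt.nonarchimedean _ _).trans (max_le ?_ ?_)
    · have h1 : ‖a * (a ^ k - b ^ k)‖ ≤ r * (d * r ^ (k - 1)) :=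
        (norm_mul_le _ _).trans (mul_le_mul ha ih (norm_nonneg _) hr0)
      have : r * (d * r ^ (k - 1)) ≤ d * r ^ k := by
        calc r * (d * r ^ (k - 1)) = d * (r * r ^ (k - 1)) := by ring
        _ ≤ d * r ^ k := by nlinarith [pow_nonneg hr0 (k - 1)]
      simpa [Nat.succ_sub_one] using h1.trans this
    · have h2 : ‖(a - b) * b ^ k‖ ≤ d * r ^ k :=
        (norm_mul_le _ _).trans
          (mul_le_mul hab (padic_pow_norm_le hr0 hb k) (norm_nonneg _) hd)
      simpa [Nat.succ_sub_one] using h2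


lemma finsupp_single_pow_prod {n : ℕ} (x : Fin n → ℤ_[p]) (a : Fin n) (b : ℕ) :
    ((Finsupp.single a b).prod fun i k => x i ^ k) = x a ^ b :=
  Finsupp.prod_single_index (pow_zero _)

lemma finsupp_single_sum_id {n : ℕ} (a : Fin n) (b : ℕ) :
    ((Finsupp.single a b).sum fun _ k => k) = b :=
  Finsupp.sum_single_index rfl

lemma padic_finsupp_prod_norm_le {n : ℕ} {x : Fin n → ℤ_[p]} {r : ℝ} (hr0 : 0 ≤ r)
    (hx : ∀ i, ‖x i‖ ≤ r) (α : Fin n →₀ ℕ) :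
    ‖α.prod fun i k => x i ^ k‖ ≤ r ^ (α.sum fun _ k => k) := by
  induction α using Finsupp.induction with
  | zero => simp
  | single_add a b f haf hb ih =>
    rw [Finsupp.prod_add_index' (fun i => pow_zero _) (fun i k l => pow_add _ _ _),
      Finsupp.sum_add_index' (fun i => rfl) (fun i k l => rfl),
      finsupp_single_pow_prod, finsupp_single_sum_id, pow_add]
    exact (norm_mul_le _ _).trans
      (mul_le_mul (padic_pow_norm_le hr0 (hx a) b) ih (norm_nonneg _) (by positivity))

lemma padic_finsupp_prod_sub_norm_le {n : ℕ} {a b : Fin n → ℤ_[p]} {r d : ℝ}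
    (hr0 : 0 ≤ r) (hr1 : r ≤ 1) (hd : 0 ≤ d)
    (ha : ∀ i, ‖a i‖ ≤ r) (hb : ∀ i, ‖b i‖ ≤ r) (hab : ∀ i, ‖a i - b i‖ ≤ d)
    (α : Fin n →₀ ℕ) :
    ‖(α.prod fun i k => a i ^ k) - (α.prod fun i k => b i ^ k)‖
      ≤ d * r ^ ((α.sum fun _ k => k) - 1) := by
  induction α using Finsupp.induction with
  | zero => simpa using hd
  | single_add i k f hif hk ih =>
    rw [Finsupp.prod_add_index' (fun j => pow_zero _) (fun j u v => pow_add _ _ _),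
      Finsupp.prod_add_index' (fun j => pow_zero _) (fun j u v => pow_add _ _ _),
      Finsupp.sum_add_index' (fun j => rfl) (fun j u v => rfl),
      finsupp_single_pow_prod, finsupp_single_pow_prod, finsupp_single_sum_id]
    set sf := f.sum fun _ k => k with hsf
    set Pa := f.prod fun i k => a i ^ k
    set Pb := f.prod fun i k => b i ^ k
    have hid : a i ^ k * Pa - b i ^ k * Pb = a i ^ k * (Pa - Pb) + (a i ^ k - b i ^ k) * Pb := by
      ring
    rw [hid]
    have hkey : ∀ u v : ℕ, k + sf - 1 ≤ u + v → r ^ u * r ^ v ≤ r ^ (k + sf - 1) := by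
      intro u v huv
      rw [← pow_add]
      exact pow_le_pow_of_le_one hr0 hr1 huv
    refine (PadicInt.nonarchimedean _ _).trans (max_le ?_ ?_)
    · have h1 : ‖a i ^ k * (Pa - Pb)‖ ≤ r ^ k * (d * r ^ (sf - 1)) :=
        (norm_mul_le _ _).trans
          (mul_le_mul (padic_pow_norm_le hr0 (ha i) k) ih (norm_nonneg _) (by positivity))
      refine h1.trans ?_
      calc r ^ k * (d * r ^ (sf - 1)) = d * (r ^ k * r ^ (sf - 1)) := by ring
        _ ≤ d * r ^ (k + sf - 1) := by
            have := hkey k (sf - 1) (by omega)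
            nlinarith [pow_nonneg hr0 k, pow_nonneg hr0 (sf - 1)]
    · have h2 : ‖(a i ^ k - b i ^ k) * Pb‖ ≤ d * r ^ (k - 1) * r ^ sf :=
        (norm_mul_le _ _).trans
          (mul_le_mul (padic_pow_sub_pow_norm_le hr0 hr1 hd (ha i) (hb i) (hab i) k)
            (padic_finsupp_prod_norm_le hr0 hb f) (norm_nonneg _) (by positivity))
      refine h2.trans ?_
      calc d * r ^ (k - 1) * r ^ sf = d * (r ^ (k - 1) * r ^ sf) := by ring
        _ ≤ d * r ^ (k + sf - 1) := by
            have := hkey (k - 1) sf (by omega)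
            nlinarith [pow_nonneg hr0 (k - 1), pow_nonneg hr0 sf]

/-- Key estimate: a polynomial with no constant and no linear terms is a strict
contraction on small balls. -/
lemma padic_eval_sub_norm_le {n : ℕ} (q : MvPolynomial (Fin n) ℤ_[p])
    (hq : ∀ α : Fin n →₀ ℕ, (α.sum fun _ k => k) ≤ 1 → coeff α q = 0)
    {r d : ℝ} (hr0 : 0 ≤ r) (hr1 : r ≤ 1) (hd : 0 ≤ d)
    {x y : Fin n → ℤ_[p]} (hx : ∀ i, ‖x i‖ ≤ r) (hy : ∀ i, ‖y i‖ ≤ r)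
    (hxy : ∀ i, ‖x i - y i‖ ≤ d) :
    ‖eval x q - eval y q‖ ≤ d * r := by
  rw [eval_eq, eval_eq, ← Finset.sum_sub_distrib]
  refine padic_norm_finset_sum_le _ _ (by positivity) ?_
  intro α hα
  rw [← mul_sub]
  rcases le_or_gt (α.sum fun _ k => k) 1 with h1 | h2
  · rw [hq α h1]
    simpa using by positivity
  · have hprod : ‖(α.prod fun i k => x i ^ k) - (α.prod fun i k => y i ^ k)‖
        ≤ d * r ^ ((α.sum fun _ k => k) - 1) :=
      padic_finsupp_prod_sub_norm_le hr0 hr1 hd hx hy hxy α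
    have hps : (α.prod fun i k => x i ^ k) = ∏ i ∈ α.support, x i ^ α i := rfl
    have hps' : (α.prod fun i k => y i ^ k) = ∏ i ∈ α.support, y i ^ α i := rfl
    rw [← hps, ← hps']
    refine (norm_mul_le _ _).trans ?_
    have h3 : r ^ ((α.sum fun _ k => k) - 1) ≤ r := by
      have := pow_le_pow_of_le_one hr0 hr1 (show 1 ≤ (α.sum fun _ k => k) - 1 by omega)
      simpa using this
    calc ‖coeff α q‖ * ‖(α.prod fun i k => x i ^ k) - (α.prod fun i k => y i ^ k)‖
        ≤ 1 * (d * r ^ ((α.sum fun _ k => k) - 1)) :=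
          mul_le_mul (PadicInt.norm_le_one _) hprod (norm_nonneg _) zero_le_one
      _ = d * r ^ ((α.sum fun _ k => k) - 1) := one_mul _
      _ ≤ d * r := by nlinarith

/-- Evaluation respects congruences modulo an ideal. -/
lemma padic_eval_sub_mem_ideal {n : ℕ} (I : Ideal ℤ_[p]) (q : MvPolynomial (Fin n) ℤ_[p])
    (x y : Fin n → ℤ_[p]) (h : ∀ i, x i - y i ∈ I) :
    eval x q - eval y q ∈ I := by
  induction q using MvPolynomial.induction_on with
  | C a => simpa using I.zero_mem
  | add f g hf hg =>
    have : eval x (f + g) - eval y (f + g) = (eval x f - eval y f) + (eval x g - eval y g) := by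
      simp only [map_add]; ring
    rw [this]; exact I.add_mem hf hg
  | mul_X f i hf =>
    have : eval x (f * X i) - eval y (f * X i)
        = eval x f * (x i - y i) + (eval x f - eval y f) * y i := by
      simp only [map_mul, eval_X]; ring
    rw [this]
    exact I.add_mem (I.mul_mem_left _ (h i)) (I.mul_mem_right _ hf)

lemma padic_coeff_zero_pderiv {n : ℕ} (j : Fin n) (q : MvPolynomial (Fin n) ℤ_[p]) :
    coeff 0 (pderiv j q) = coeff (Finsupp.single j 1) q := by
  induction q using MvPolynomial.induction_on' with
  | add f g hf hg => simp [map_add, hf, hg]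
  | monomial s a =>
    rw [pderiv_monomial, coeff_monomial, coeff_monomial]
    by_cases hs : s = Finsupp.single j 1
    · subst hs; simp
    · rw [if_neg hs]
      by_cases h0 : s - Finsupp.single j 1 = 0
      · rw [if_pos h0]
        have hle : s ≤ Finsupp.single j 1 := tsub_eq_zero_iff_le.mp h0
        have hsj : s j = 0 := by
          by_contra hne
          apply hs
          have h1 : s j ≤ 1 := by
            simpa using (Finsupp.le_def.mp hle) j
          have hj1 : s j = 1 := by omega
          ext i
          rcases eq_or_ne i j with rfl | hij
          · simpa [Finsupp.single_apply] using hj1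
          · have := (Finsupp.le_def.mp hle) i
            simp only [Finsupp.single_apply, if_neg (Ne.symm hij)] at this ⊢
            omega
        simp [hsj]
      · rw [if_neg h0]

lemma finsupp_sum_le_one_cases {n : ℕ} (α : Fin n →₀ ℕ) (h : (α.sum fun _ k => k) ≤ 1) :
    α = 0 ∨ ∃ j, α = Finsupp.single j 1 := by
  rcases eq_or_ne α 0 with h0 | hne
  · exact Or.inl h0
  right
  obtain ⟨j, hj⟩ := Finsupp.support_nonempty_iff.mpr hne
  refine ⟨j, ?_⟩
  have hsum : (α.sum fun _ k => k) = ∑ i ∈ α.support, α i := rfl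
  have hj1 : 1 ≤ α j := Nat.one_le_iff_ne_zero.mpr (Finsupp.mem_support_iff.mp hj)
  ext i
  rcases eq_or_ne i j with rfl | hij
  · have hle : α i ≤ ∑ k ∈ α.support, α k :=
      Finset.single_le_sum (fun _ _ => Nat.zero_le _) hj
    rw [hsum] at h
    rw [Finsupp.single_eq_same]
    omega
  · have hzero : α i = 0 := by
      by_contra hne2
      have hi : i ∈ α.support := Finsupp.mem_support_iff.mpr hne2
      have hsub : ({i, j} : Finset (Fin n)) ⊆ α.support := by
        intro k hk
        simp only [Finset.mem_insert, Finset.mem_singleton] at hk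
        rcases hk with rfl | rfl
        · exact hi
        · exact hj
      have h2 : α i + α j ≤ ∑ k ∈ α.support, α k := by
        have := Finset.sum_le_sum_of_subset (f := fun k => α k) hsub
        rwa [Finset.sum_pair hij] at this
      rw [hsum] at h
      omega
    simp [hzero, Finsupp.single_apply, Ne.symm hij]

end Aux

set_option maxHeartbeats 1000000 in
open Matrix in
/-- Multivariate Hensel lemma: a polynomial map f : (p^mℤ_p)ⁿ → ℤ_pⁿ with f(0) = 0
and everywhere-unit Jacobian maps M := (p^mℤ_p)ⁿ into itself and is a bijection
M → M. -/
theorem stmt_11 (p : ℕ) [Fact p.Prime] (m n : ℕ) (hm : 1 ≤ m) (hn : 1 ≤ n)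
    (F : Fin n → MvPolynomial (Fin n) ℤ_[p])
    (h0 : ∀ i, MvPolynomial.eval (0 : Fin n → ℤ_[p]) (F i) = 0)
    (M : Set (Fin n → ℤ_[p]))
    (hM : M = {x | ∀ i, x i ∈ Ideal.span {(p : ℤ_[p]) ^ m}})
    (hJ : ∀ x ∈ M, IsUnit (Matrix.det
        (Matrix.of fun i j => MvPolynomial.eval x (MvPolynomial.pderiv j (F i))))) :
    (∀ x ∈ M, ∀ i, MvPolynomial.eval x (F i) ∈ Ideal.span {(p : ℤ_[p]) ^ m}) ∧
    Set.BijOn (fun x i => MvPolynomial.eval x (F i)) M M := by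
  classical
  have hev0 : ∀ q : MvPolynomial (Fin n) ℤ_[p],
      eval (0 : Fin n → ℤ_[p]) q = coeff 0 q := by
    intro q
    rw [MvPolynomial.eval_zero, constantCoeff_eq]
  set I : Ideal ℤ_[p] := Ideal.span {(p : ℤ_[p]) ^ m} with hIdef
  have part1 : ∀ x ∈ M, ∀ i, eval x (F i) ∈ I := by
    intro x hx i
    have hx' : ∀ j, x j ∈ I := by rw [hM] at hx; exact hx
    have := padic_eval_sub_mem_ideal I (F i) x 0 (fun j => by simpa using hx' j)
    rw [h0 i, sub_zero] at this
    exact this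
  refine ⟨part1, ?_⟩
  set r : ℝ := (p : ℝ) ^ (-(m : ℤ)) with hrdef
  have hp1 : (1 : ℝ) < p := by exact_mod_cast (Fact.out : p.Prime).one_lt
  have hr0 : 0 ≤ r := by positivity
  have hr1 : r < 1 := by
    have h1 : r = ((p : ℝ) ^ m)⁻¹ := by rw [hrdef, _root_.zpow_neg, zpow_natCast]
    rw [h1]
    have h2 : (1 : ℝ) < (p : ℝ) ^ m := one_lt_pow₀ hp1 (by omega)
    exact inv_lt_one_of_one_lt₀ h2
  have hmem : ∀ z : ℤ_[p], z ∈ I ↔ ‖z‖ ≤ r :=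
    fun z => (PadicInt.norm_le_pow_iff_mem_span_pow z m).symm
  have hMiff : ∀ x : Fin n → ℤ_[p], x ∈ M ↔ ∀ i, ‖x i‖ ≤ r := by
    intro x
    rw [hM]
    simp only [Set.mem_setOf_eq]
    exact forall_congr' fun i => hmem (x i)
  have h0M : (0 : Fin n → ℤ_[p]) ∈ M := by
    rw [hM]; intro i; simpa using I.zero_mem
  set L : Matrix (Fin n) (Fin n) ℤ_[p] :=
    Matrix.of (fun i j => coeff (Finsupp.single j 1) (F i)) with hLdef
  have hLunit : IsUnit L.det := by
    have hJ0 := hJ 0 h0M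
    have heq : (Matrix.of fun i j => eval (0 : Fin n → ℤ_[p]) (pderiv j (F i))) = L := by
      ext i j
      show eval (0 : Fin n → ℤ_[p]) (pderiv j (F i)) = coeff (Finsupp.single j 1) (F i)
      rw [hev0, padic_coeff_zero_pderiv]
    rwa [heq] at hJ0
  obtain ⟨B, hLB, hBL⟩ : ∃ B, L * B = 1 ∧ B * L = 1 :=
    ⟨L⁻¹, Matrix.mul_nonsing_inv L hLunit, Matrix.nonsing_inv_mul L hLunit⟩
  set Rq : Fin n → MvPolynomial (Fin n) ℤ_[p] :=
    fun i => F i - ∑ j, MvPolynomial.C (L i j) * MvPolynomial.X j with hRqdef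
  have hXcoeff : ∀ (j j' : Fin n),
      coeff (Finsupp.single j 1) (X j' : MvPolynomial (Fin n) ℤ_[p])
        = if j' = j then 1 else 0 := by
    intro j j'
    rcases eq_or_ne j' j with rfl | hne
    · simp [coeff_X]
    · rw [coeff_X', if_neg (fun h => hne (Finsupp.single_left_injective one_ne_zero h)),
        if_neg hne]
  have hRlow : ∀ i (α : Fin n →₀ ℕ), (α.sum fun _ k => k) ≤ 1 → coeff α (Rq i) = 0 := by
    intro i α hα
    have hsplit : coeff α (Rq i) = coeff α (F i) - ∑ j, L i j * coeff α (X j) := by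
      simp [hRqdef, coeff_sub, coeff_sum, coeff_C_mul]
    rcases finsupp_sum_le_one_cases α hα with rfl | ⟨j, rfl⟩
    · have hF0 : coeff 0 (F i) = 0 := by rw [← hev0]; exact h0 i
      have hX0 : ∀ j : Fin n, coeff (0 : Fin n →₀ ℕ) (X j : MvPolynomial (Fin n) ℤ_[p]) = 0 := by
        intro j
        rw [coeff_X', if_neg (by simp [Finsupp.single_eq_zero])]
      simp [hsplit, hF0, hX0]
    · have hsum : ∑ j', L i j' * coeff (Finsupp.single j 1) (X j' : MvPolynomial (Fin n) ℤ_[p])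
          = L i j := by
        simp only [hXcoeff, mul_ite, mul_one, mul_zero]
        rw [Finset.sum_ite_eq' Finset.univ j (fun j' => L i j')]
        simp
      rw [hsplit, hsum]
      have : coeff (Finsupp.single j 1) (F i) = L i j := by rw [hLdef]; rfl
      rw [this, sub_self]
  have hfeval : ∀ (x : Fin n → ℤ_[p]) (i), eval x (F i) = (L *ᵥ x) i + eval x (Rq i) := by
    intro x i
    have hRe : eval x (Rq i) = eval x (F i) - ∑ j, L i j * x j := by
      simp [hRqdef, map_sub, map_sum]
    have hmv : (L *ᵥ x) i = ∑ j, L i j * x j := rfl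
    rw [hRe, hmv]
    ring
  have hRq0 : ∀ i, eval (0 : Fin n → ℤ_[p]) (Rq i) = 0 := by
    intro i
    rw [hev0]
    exact hRlow i 0 (by simp)
  have hRlip : ∀ (x y : Fin n → ℤ_[p]), (∀ j, ‖x j‖ ≤ r) → (∀ j, ‖y j‖ ≤ r) →
      ∀ d : ℝ, 0 ≤ d → (∀ j, ‖x j - y j‖ ≤ d) →
      ∀ i, ‖eval x (Rq i) - eval y (Rq i)‖ ≤ d * r :=
    fun x y hx hy d hd hxy i =>
      padic_eval_sub_norm_le (Rq i) (hRlow i) hr0 hr1.le hd hx hy hxy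
  have hRbound : ∀ (x : Fin n → ℤ_[p]), (∀ j, ‖x j‖ ≤ r) → ∀ i, ‖eval x (Rq i)‖ ≤ r * r := by
    intro x hx i
    have := hRlip x 0 hx (fun j => by simpa using hr0) r hr0 (fun j => by simpa using hx j) i
    rw [hRq0 i, sub_zero] at this
    exact this
  have hBve : ∀ (v : Fin n → ℤ_[p]) (i : Fin n), (B *ᵥ v) i = ∑ j, B i j * v j :=
    fun v i => rfl
  have hBv : ∀ (v : Fin n → ℤ_[p]) (c : ℝ), 0 ≤ c → (∀ j, ‖v j‖ ≤ c) →
      ∀ i, ‖(B *ᵥ v) i‖ ≤ c := by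
    intro v c hc hv i
    rw [hBve]
    refine padic_norm_finset_sum_le _ _ hc ?_
    intro j _
    calc ‖B i j * v j‖ ≤ ‖B i j‖ * ‖v j‖ := norm_mul_le _ _
      _ ≤ 1 * c := mul_le_mul (PadicInt.norm_le_one _) (hv j) (norm_nonneg _) zero_le_one
      _ = c := one_mul c
  have hmaps : Set.MapsTo (fun x i => MvPolynomial.eval x (F i)) M M := by
    intro x hx
    rw [hM]
    intro i
    exact part1 x hx i
  have hinj : Set.InjOn (fun x i => MvPolynomial.eval x (F i)) M := by
    intro x hx y hy hfxy
    have hx' := (hMiff x).mp hx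
    have hy' := (hMiff y).mp hy
    have hd0 : (0 : ℝ) ≤ ‖x - y‖ := norm_nonneg _
    have hdiff : ∀ j, ‖x j - y j‖ ≤ ‖x - y‖ := fun j => norm_le_pi_norm (x - y) j
    have hLw : ∀ i, (L *ᵥ (x - y)) i = eval y (Rq i) - eval x (Rq i) := by
      intro i
      have h1 : eval x (F i) = eval y (F i) := congrFun hfxy i
      have hmv : (L *ᵥ (x - y)) i = (L *ᵥ x) i - (L *ᵥ y) i := by
        rw [Matrix.mulVec_sub]; rfl
      rw [hmv]
      linear_combination hfeval y i - hfeval x i + h1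
    have hweq : x - y = B *ᵥ (L *ᵥ (x - y)) := by
      rw [Matrix.mulVec_mulVec, hBL, Matrix.one_mulVec]
    have hnorm : ∀ i, ‖(x - y) i‖ ≤ ‖x - y‖ * r := by
      intro i
      have hB := hBv (L *ᵥ (x - y)) (‖x - y‖ * r) (by positivity) (fun j => by
        rw [hLw j]
        exact hRlip y x hy' hx' ‖x - y‖ hd0
          (fun k => by rw [norm_sub_rev]; exact hdiff k) j) i
      rwa [← hweq] at hB
    have hle : ‖x - y‖ ≤ ‖x - y‖ * r := by
      refine (pi_norm_le_iff_of_nonneg (by positivity)).mpr hnorm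
    have hz : ‖x - y‖ = 0 := by nlinarith
    have : x - y = 0 := norm_eq_zero.mp hz
    exact sub_eq_zero.mp this
  have hsurj : Set.SurjOn (fun x i => MvPolynomial.eval x (F i)) M M := by
    intro y hy
    have hy' := (hMiff y).mp hy
    set G : (Fin n → ℤ_[p]) → (Fin n → ℤ_[p]) :=
      fun x => B *ᵥ (fun i => y i - eval x (Rq i)) with hGdef
    have hGmem : ∀ x, (∀ j, ‖x j‖ ≤ r) → ∀ i, ‖G x i‖ ≤ r := by
      intro x hx i
      refine hBv _ r hr0 ?_ i
      intro j
      refine (padic_norm_sub_le_max _ _).trans (max_le (hy' j) ?_)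
      have := hRbound x hx j
      nlinarith
    have hGlip : ∀ x x', (∀ j, ‖x j‖ ≤ r) → (∀ j, ‖x' j‖ ≤ r) →
        ∀ i, ‖G x i - G x' i‖ ≤ ‖x - x'‖ * r := by
      intro x x' hx hx' i
      have hGx : ∀ z, G z = B *ᵥ (fun i => y i - eval z (Rq i)) := fun z => rfl
      have hsub : G x - G x' = B *ᵥ (fun j => eval x' (Rq j) - eval x (Rq j)) := by
        have hvec : ((fun i => y i - eval x (Rq i)) - fun i => y i - eval x' (Rq i))
            = fun j => eval x' (Rq j) - eval x (Rq j) := by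
          funext j
          show (y j - eval x (Rq j)) - (y j - eval x' (Rq j)) = eval x' (Rq j) - eval x (Rq j)
          ring
        rw [hGx x, hGx x', ← Matrix.mulVec_sub, hvec]
      have hcomp : G x i - G x' i = (G x - G x') i := rfl
      rw [hcomp, hsub]
      refine hBv _ _ (by positivity) ?_ i
      intro j
      refine hRlip x' x hx' hx ‖x - x'‖ (norm_nonneg _) ?_ j
      intro k
      rw [norm_sub_rev]
      exact norm_le_pi_norm (x - x') k
    have hclosed : IsClosed M := by
      have hMeq : M = ⋂ i, {x : Fin n → ℤ_[p] | ‖x i‖ ≤ r} := by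
        ext x
        simp only [Set.mem_iInter, Set.mem_setOf_eq]
        exact hMiff x
      rw [hMeq]
      exact isClosed_iInter fun i =>
        isClosed_le (Continuous.norm (continuous_apply i)) continuous_const
    haveI : CompleteSpace M := hclosed.completeSpace_coe
    haveI : Nonempty M := ⟨⟨0, h0M⟩⟩
    set g : M → M := fun x => ⟨G x.1, (hMiff _).mpr (hGmem x.1 ((hMiff _).mp x.2))⟩ with hgdef
    set K : NNReal := ⟨r, hr0⟩ with hKdef
    have hcontr : ContractingWith K g := by
      constructor
      · have : (K : ℝ) < 1 := hr1
        exact_mod_cast this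
      · refine LipschitzWith.of_dist_le_mul ?_
        intro a b
        rw [Subtype.dist_eq, dist_eq_norm]
        have hab : dist a b = ‖a.1 - b.1‖ := by rw [Subtype.dist_eq, dist_eq_norm]
        rw [hab]
        refine (pi_norm_le_iff_of_nonneg (by positivity)).mpr ?_
        intro i
        have hGl := hGlip a.1 b.1 ((hMiff _).mp a.2) ((hMiff _).mp b.2) i
        have hcomp : ((g a : Fin n → ℤ_[p]) - (g b : Fin n → ℤ_[p])) i
            = G a.1 i - G b.1 i := rfl
        rw [hcomp]
        calc ‖G a.1 i - G b.1 i‖ ≤ ‖a.1 - b.1‖ * r := hGl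
          _ = (K : ℝ) * ‖a.1 - b.1‖ := by rw [mul_comm]; rfl
    set x : M := ContractingWith.fixedPoint g hcontr with hxdef
    have hxfix : g x = x := hcontr.fixedPoint_isFixedPt
    have hx1 : G x.1 = x.1 := congrArg Subtype.val hxfix
    refine ⟨x.1, x.2, ?_⟩
    have hres : ∀ i, eval x.1 (F i) = y i := by
      intro i
      have hLx : L *ᵥ x.1 = fun i => y i - eval x.1 (Rq i) := by
        conv_lhs => rw [← hx1]
        show L *ᵥ (B *ᵥ _) = _
        rw [Matrix.mulVec_mulVec, hLB, Matrix.one_mulVec]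
      have hfe := hfeval x.1 i
      rw [hfe, congrFun hLx i]
      ring
    exact funext hres
  exact ⟨hmaps, hinj, hsurj⟩
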